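/- If P is a symmetric positive definite solution of the Riccati equation A P + P Aᵀ + G R Gᵀ − P Hᵀ(JSJᵀ)⁻¹ H P = 0 with R > 0 and (A, G) controllable, then A − P Hᵀ(JSJᵀ)⁻¹ H is Hurwitz. -/

import Mathlib

open Matrix Complex

namespace Stmt10Aux

/-- complexification of a real matrix -/
noncomputable def cm {a b : Type*} (M : Matrix a b ℝ) : Matrix a b ℂ :=
  M.map (algebraMap ℝ ℂ)

lemma cm_apply {a b : Type*} (M : Matrix a b ℝ) (i : a) (j : b) :
    cm M i j = (M i j : ℂ) := rfl

lemma cm_mul {a b c : Type*} [Fintype b] (M : Matrix a b ℝ) (N : Matrix b c ℝ) :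
    cm (M * N) = cm M * cm N := by
  ext i j; simp [cm, Matrix.mul_apply]

lemma cm_add {a b : Type*} (M N : Matrix a b ℝ) : cm (M + N) = cm M + cm N := by
  ext i j; simp [cm]

lemma cm_sub {a b : Type*} (M N : Matrix a b ℝ) : cm (M - N) = cm M - cm N := by
  ext i j; simp [cm]

lemma cm_smul {a b : Type*} (r : ℝ) (M : Matrix a b ℝ) :
    cm (r • M) = (r : ℂ) • cm M := by
  ext i j; simp [cm]

lemma cm_transpose {a b : Type*} (M : Matrix a b ℝ) : cm Mᵀ = (cm M)ᵀ := rfl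

lemma cm_zero {a b : Type*} : cm (0 : Matrix a b ℝ) = 0 := by
  ext i j; simp [cm]

lemma cm_one {a : Type*} [DecidableEq a] : cm (1 : Matrix a a ℝ) = 1 := by
  ext i j; by_cases h : i = j <;> simp [cm, Matrix.one_apply, h]

/-- star (conjugate) of `v ᵥ* cm M` is `star v ᵥ* cm M`. -/
lemma star_vecMul_cm {a b : Type*} [Fintype a] (M : Matrix a b ℝ) (v : a → ℂ) :
    star (v ᵥ* cm M) = (star v) ᵥ* cm M := by
  funext j
  simp only [Pi.star_apply, vecMul, dotProduct, cm_apply, star_sum, star_mul',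
    Complex.star_def, Complex.conj_ofReal]

lemma vecMul_cm_re {a b : Type*} [Fintype a] (M : Matrix a b ℝ) (v : a → ℂ) (j : b) :
    ((v ᵥ* cm M) j).re = ((fun i => (v i).re) ᵥ* M) j := by
  simp [vecMul, dotProduct, cm_apply, Complex.re_sum, Complex.mul_re]

lemma vecMul_cm_im {a b : Type*} [Fintype a] (M : Matrix a b ℝ) (v : a → ℂ) (j : b) :
    ((v ᵥ* cm M) j).im = ((fun i => (v i).im) ᵥ* M) j := by
  simp [vecMul, dotProduct, cm_apply, Complex.im_sum, Complex.mul_im]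

lemma re_dot_cm {n : ℕ} (M : Matrix (Fin n) (Fin n) ℝ) (v : Fin n → ℂ) :
    (v ⬝ᵥ (cm M *ᵥ star v)).re =
      (fun i => (v i).re) ⬝ᵥ (M *ᵥ fun i => (v i).re) +
      (fun i => (v i).im) ⬝ᵥ (M *ᵥ fun i => (v i).im) := by
  have hx_re : ∀ i, ((cm M *ᵥ star v) i).re = (M *ᵥ fun j => (v j).re) i := by
    intro i
    simp [mulVec, dotProduct, cm_apply, Complex.re_sum, Complex.mul_re]
  have hx_im : ∀ i, ((cm M *ᵥ star v) i).im = -(M *ᵥ fun j => (v j).im) i := by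
    intro i
    simp [mulVec, dotProduct, cm_apply, Complex.im_sum, Complex.mul_im,
      Finset.sum_neg_distrib]
  simp only [dotProduct, Complex.re_sum, Complex.mul_re, hx_re, hx_im,
    ← Finset.sum_add_distrib]
  apply Finset.sum_congr rfl
  intro i _
  simp only [mulVec, dotProduct]
  ring

lemma re_dot_cm_pos {n : ℕ} {M : Matrix (Fin n) (Fin n) ℝ} (hM : M.PosDef)
    {v : Fin n → ℂ} (hv : v ≠ 0) : 0 < (v ⬝ᵥ (cm M *ᵥ star v)).re := by
  rw [re_dot_cm]
  set a : Fin n → ℝ := fun i => (v i).re with ha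
  set b : Fin n → ℝ := fun i => (v i).im with hb
  have hsd := hM.posSemidef
  have hnn : ∀ x : Fin n → ℝ, 0 ≤ x ⬝ᵥ (M *ᵥ x) := by
    intro x; simpa using hsd.dotProduct_mulVec_nonneg x
  have hp : ∀ x : Fin n → ℝ, x ≠ 0 → 0 < x ⬝ᵥ (M *ᵥ x) := by
    intro x hx; simpa using hM.dotProduct_mulVec_pos hx
  have hab : a ≠ 0 ∨ b ≠ 0 := by
    by_contra hcon
    push_neg at hcon
    apply hv
    funext i
    have h1 : (v i).re = 0 := congrFun hcon.1 i
    have h2 : (v i).im = 0 := congrFun hcon.2 i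
    exact Complex.ext h1 h2
  rcases hab with h | h
  · have := hp a h; have := hnn b; linarith
  · have := hp b h; have := hnn a; linarith

lemma dot_star_self (g : Fin 1 → ℂ) :
    g ⬝ᵥ star g = (Complex.normSq (g 0) : ℝ) := by
  simp [dotProduct, Complex.mul_conj]

lemma rank_full_vecMul_eq_zero {n : ℕ} {m : Type*} [Fintype m] (M : Matrix (Fin n) m ℝ)
    (h : M.rank = n) (u : Fin n → ℝ) (hu : u ᵥ* M = 0) : u = 0 := by
  have hsurj : Function.Surjective M.mulVecLin := by
    rw [← LinearMap.range_eq_top]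
    apply Submodule.eq_top_of_finrank_eq
    rw [show Module.finrank ℝ (LinearMap.range M.mulVecLin) = M.rank from rfl, h]
    simp [Module.finrank_pi]
  obtain ⟨x, hx⟩ := hsurj u
  rw [Matrix.mulVecLin_apply] at hx
  have : u ⬝ᵥ u = 0 := by
    nth_rewrite 2 [← hx]
    rw [Matrix.dotProduct_mulVec, hu, zero_dotProduct]
  exact dotProduct_self_eq_zero.mp this

lemma vecMul_smulM {a b : Type*} [Fintype a] (r : ℂ) (M : Matrix a b ℂ) (v : a → ℂ) :
    v ᵥ* (r • M) = r • (v ᵥ* M) := by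
  funext j
  simp [vecMul, dotProduct, Finset.mul_sum, mul_left_comm]

end Stmt10Aux

set_option maxHeartbeats 1000000 in
open Stmt10Aux in
open Matrix in
/-- If `P` is a symmetric positive definite solution of the Riccati equation
`A P + P Aᵀ + R·G Gᵀ − P Hᵀ (JSJᵀ)⁻¹ H P = 0` with `R > 0`, `JSJᵀ = c > 0`, and
`(A, G)` controllable, then `A − P Hᵀ c⁻¹ H` is Hurwitz. -/
theorem stmt10 (n : ℕ) (A : Matrix (Fin n) (Fin n) ℝ) (G : Matrix (Fin n) (Fin 1) ℝ)
    (H : Matrix (Fin 1) (Fin n) ℝ) (R c : ℝ) (hR : 0 < R) (hc : 0 < c)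
    (hctrb : (Matrix.of fun i (p : Fin n × Fin 1) => (A ^ (p.1 : ℕ) * G) i p.2 :
        Matrix (Fin n) (Fin n × Fin 1) ℝ).rank = n)
    (P : Matrix (Fin n) (Fin n) ℝ) (hsym : P.IsSymm) (hpd : P.PosDef)
    (hric : A * P + P * Aᵀ + R • (G * Gᵀ) - c⁻¹ • (P * Hᵀ * H * P) = 0) :
    ∀ z ∈ spectrum ℂ ((A - c⁻¹ • (P * Hᵀ * H)).map (algebraMap ℝ ℂ)), z.re < 0 := by
  intro z hz
  set F : Matrix (Fin n) (Fin n) ℝ := A - c⁻¹ • (P * Hᵀ * H) with hF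
  have hmap : (A - c⁻¹ • (P * Hᵀ * H)).map (algebraMap ℝ ℂ) = cm F := rfl
  rw [hmap] at hz
  -- extract a left eigenvector
  have hdet : (algebraMap ℂ (Matrix (Fin n) (Fin n) ℂ) z - cm F).det = 0 := by
    have h1 := spectrum.mem_iff.mp hz
    by_contra hd
    exact h1 ((Matrix.isUnit_iff_isUnit_det _).mpr (isUnit_iff_ne_zero.mpr hd))
  obtain ⟨v, hvne, hveq⟩ := (Matrix.exists_vecMul_eq_zero_iff).mpr hdet
  have hvF : v ᵥ* cm F = z • v := by
    have h1 : v ᵥ* algebraMap ℂ (Matrix (Fin n) (Fin n) ℂ) z - v ᵥ* cm F = 0 := by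
      rw [← Matrix.vecMul_sub]; exact hveq
    have h2 : v ᵥ* algebraMap ℂ (Matrix (Fin n) (Fin n) ℂ) z = z • v := by
      rw [Algebra.algebraMap_eq_smul_one, vecMul_smulM, Matrix.vecMul_one]
    rw [h2] at h1
    exact (sub_eq_zero.mp h1).symm
  -- real Riccati identity for F
  have ht : (P * Hᵀ * H)ᵀ = Hᵀ * (H * P) := by
    rw [Matrix.transpose_mul, Matrix.transpose_mul, Matrix.transpose_transpose, hsym.eq]
  have key : F * P + P * Fᵀ + (R • (G * Gᵀ) + c⁻¹ • (P * Hᵀ * H * P)) = 0 := by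
    have e : F * P + P * Fᵀ + (R • (G * Gᵀ) + c⁻¹ • (P * Hᵀ * H * P)) =
        A * P + P * Aᵀ + R • (G * Gᵀ) - c⁻¹ • (P * Hᵀ * H * P) := by
      rw [hF]
      simp only [Matrix.sub_mul, Matrix.mul_sub, Matrix.transpose_sub, Matrix.transpose_smul,
        ht, Matrix.smul_mul, Matrix.mul_smul, ← Matrix.mul_assoc]
      abel
    rw [e, hric]
  -- complexified identity
  have keyc : cm F * cm P + cm P * (cm F)ᵀ +
      ((R : ℂ) • (cm G * (cm G)ᵀ) +
        ((c⁻¹ : ℝ) : ℂ) • (cm P * (cm H)ᵀ * cm H * cm P)) = 0 := by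
    have h0 := congrArg cm key
    rw [cm_zero] at h0
    rw [← h0]
    simp only [cm_add, cm_mul, cm_smul, cm_transpose]
  set w : Fin n → ℂ := star v with hw
  set q : ℂ := v ⬝ᵥ (cm P *ᵥ w) with hqdef
  set g : Fin 1 → ℂ := v ᵥ* cm G with hgdef
  set h : Fin 1 → ℂ := v ᵥ* cm (P * Hᵀ) with hhdef
  have hwF : (cm F)ᵀ *ᵥ w = (starRingEnd ℂ z) • w := by
    rw [Matrix.mulVec_transpose, hw]
    rw [← star_vecMul_cm, hvF, star_smul]
    rfl
  have T1 : v ⬝ᵥ ((cm F * cm P) *ᵥ w) = z * q := by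
    rw [← Matrix.mulVec_mulVec, Matrix.dotProduct_mulVec, hvF, smul_dotProduct,
      smul_eq_mul]
  have T2 : v ⬝ᵥ ((cm P * (cm F)ᵀ) *ᵥ w) = (starRingEnd ℂ z) * q := by
    rw [← Matrix.mulVec_mulVec, hwF, Matrix.mulVec_smul, dotProduct_smul, smul_eq_mul]
  have T3 : v ⬝ᵥ ((cm G * (cm G)ᵀ) *ᵥ w) = g ⬝ᵥ star g := by
    rw [← Matrix.mulVec_mulVec, Matrix.mulVec_transpose, hw, ← star_vecMul_cm,
      Matrix.dotProduct_mulVec, ← hgdef]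
  have hHP : cm H * cm P = (cm (P * Hᵀ))ᵀ := by
    rw [← cm_transpose, ← cm_mul]
    rw [Matrix.transpose_mul, Matrix.transpose_transpose, hsym.eq]
  have T4 : v ⬝ᵥ ((cm P * (cm H)ᵀ * cm H * cm P) *ᵥ w) = h ⬝ᵥ star h := by
    have e : cm P * (cm H)ᵀ * cm H * cm P = cm (P * Hᵀ) * (cm (P * Hᵀ))ᵀ := by
      rw [← cm_transpose, ← cm_mul, Matrix.mul_assoc, hHP]
    rw [e, ← Matrix.mulVec_mulVec, Matrix.mulVec_transpose, hw, ← star_vecMul_cm,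
      Matrix.dotProduct_mulVec, ← hhdef]
  have main : z * q + (starRingEnd ℂ z) * q +
      ((R : ℂ) * (g ⬝ᵥ star g) + ((c⁻¹ : ℝ) : ℂ) * (h ⬝ᵥ star h)) = 0 := by
    have h0 := congrArg (fun M : Matrix (Fin n) (Fin n) ℂ => v ⬝ᵥ (M *ᵥ w)) keyc
    simp only [Matrix.add_mulVec, Matrix.smul_mulVec, dotProduct_add,
      dotProduct_smul, smul_eq_mul, Matrix.zero_mulVec, dotProduct_zero] at h0
    rw [T1, T2, T3, T4] at h0
    exact h0
  rw [dot_star_self g, dot_star_self h] at main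
  set ng : ℝ := Complex.normSq (g 0) with hngdef
  set nh : ℝ := Complex.normSq (h 0) with hnhdef
  have hre : 2 * z.re * q.re + (R * ng + c⁻¹ * nh) = 0 := by
    have h0 := congrArg Complex.re main
    simp only [Complex.add_re, Complex.mul_re, Complex.conj_re, Complex.conj_im,
      Complex.ofReal_re, Complex.ofReal_im, Complex.zero_re] at h0
    linarith
  have hqpos : 0 < q.re := re_dot_cm_pos hpd hvne
  have hng : 0 ≤ ng := Complex.normSq_nonneg _
  have hnh : 0 ≤ nh := Complex.normSq_nonneg _
  have hcinv : 0 < c⁻¹ := inv_pos.mpr hc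
  rcases lt_or_ge z.re 0 with hlt | hge
  · exact hlt
  exfalso
  have hz0 : z.re = 0 := by nlinarith
  rw [hz0] at hre
  have hng0 : ng = 0 := by nlinarith
  have hnh0 : nh = 0 := by nlinarith
  have hg0 : g = 0 := by
    funext k
    have h1 : g 0 = 0 := Complex.normSq_eq_zero.mp hng0
    have hk : k = 0 := Subsingleton.elim k 0
    rw [hk, h1]; rfl
  have hh0 : h = 0 := by
    funext k
    have h1 : h 0 = 0 := Complex.normSq_eq_zero.mp hnh0
    have hk : k = 0 := Subsingleton.elim k 0
    rw [hk, h1]; rfl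
  -- v is a left eigenvector of A
  have hvA : v ᵥ* cm A = z • v := by
    have hFA : cm F = cm A - ((c⁻¹ : ℝ) : ℂ) • (cm (P * Hᵀ) * cm H) := by
      rw [hF, cm_sub, cm_smul, ← cm_mul]
    have h1 : v ᵥ* cm F = v ᵥ* cm A - ((c⁻¹ : ℝ) : ℂ) • (v ᵥ* (cm (P * Hᵀ) * cm H)) := by
      rw [hFA, Matrix.vecMul_sub, vecMul_smulM]
    have h2 : v ᵥ* (cm (P * Hᵀ) * cm H) = 0 := by
      rw [← Matrix.vecMul_vecMul, ← hhdef, hh0, Matrix.zero_vecMul]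
    rw [h2, smul_zero, sub_zero, hvF] at h1
    exact h1.symm
  have hpow : ∀ k : ℕ, v ᵥ* cm (A ^ k) = z ^ k • v := by
    intro k
    induction k with
    | zero => simp [pow_zero, cm_one]
    | succ k ih =>
      rw [pow_succ, cm_mul, ← Matrix.vecMul_vecMul, ih, Matrix.smul_vecMul, hvA,
        smul_smul, ← pow_succ]
  have hAG : ∀ k : ℕ, v ᵥ* cm (A ^ k * G) = 0 := by
    intro k
    rw [cm_mul, ← Matrix.vecMul_vecMul, hpow k, Matrix.smul_vecMul, ← hgdef, hg0, smul_zero]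
  -- pass to real and imaginary parts
  have hctrbz : ∀ u : Fin n → ℝ, (∀ k : ℕ, u ᵥ* (A ^ k * G) = 0) → u = 0 := by
    intro u hu
    apply rank_full_vecMul_eq_zero _ hctrb
    funext p
    have h1 := congrFun (hu (p.1 : ℕ)) p.2
    simpa [Matrix.vecMul, dotProduct, Matrix.of_apply] using h1
  have ha : ∀ k : ℕ, (fun i => (v i).re) ᵥ* (A ^ k * G) = 0 := by
    intro k
    funext j
    have h1 : ((v ᵥ* cm (A ^ k * G)) j).re = 0 := by rw [hAG k]; rfl
    rw [vecMul_cm_re] at h1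
    simpa using h1
  have hb : ∀ k : ℕ, (fun i => (v i).im) ᵥ* (A ^ k * G) = 0 := by
    intro k
    funext j
    have h1 : ((v ᵥ* cm (A ^ k * G)) j).im = 0 := by rw [hAG k]; rfl
    rw [vecMul_cm_im] at h1
    simpa using h1
  have ha0 := hctrbz _ (ha)
  have hb0 := hctrbz _ (hb)
  apply hvne
  funext i
  exact Complex.ext (congrFun ha0 i) (congrFun hb0 i)
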